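/- There exists an absolute constant c > 0 such that for all integers D ≥ d ≥ 2 and all ρ > 0 the following holds: if Δ is uniformly distributed on the sphere {v ∈ ℝ^D : ‖v‖₂ = ρ}, and Δ′ ∈ ℝ^d denotes the restriction of Δ to a fixed set of d coordinates, then P( ‖Δ′ − mean(Δ′)·𝟙_d‖₂ ≤ (ρ/2)·√(d/D) ) ≤ exp(−c·d), where mean(Δ′) is the average of the d coordinates of Δ′ and 𝟙_d ∈ ℝ^d is the all-ones vector. -/

import Mathlib

set_option maxHeartbeats 1000000


open scoped BigOperators
open MeasureTheory

noncomputable section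

namespace SensTF

/-- Euclidean norm of a vector in `ℝ^d`. -/
def enorm {d : ℕ} (v : Fin d → ℝ) : ℝ := Real.sqrt (∑ j : Fin d, (v j) ^ 2)

/-- The uniform probability measure on the unit sphere of a Euclidean space. -/
def unifSphere (ι : Type) [Fintype ι] :
    Measure (Metric.sphere (0 : EuclideanSpace ℝ ι) 1) :=
  ((volume : Measure (EuclideanSpace ℝ ι)).toSphere Set.univ)⁻¹ •
    (volume : Measure (EuclideanSpace ℝ ι)).toSphere

end SensTF

open SensTF


open Pointwise

namespace S19

open Metric Pointwise Real

lemma enorm_nonneg {n : ℕ} (v : Fin n → ℝ) : 0 ≤ SensTF.enorm v := Real.sqrt_nonneg _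

lemma enorm_smul {n : ℕ} (r : ℝ) (hr : 0 ≤ r) (g : Fin n → ℝ) :
    SensTF.enorm (fun a => r * g a) = r * SensTF.enorm g := by
  unfold SensTF.enorm
  have h1 : ∑ j, (r * g j)^2 = r^2 * ∑ j, (g j)^2 := by
    rw [Finset.mul_sum]; exact Finset.sum_congr rfl fun j _ => by ring
  rw [h1, Real.sqrt_mul (sq_nonneg r), Real.sqrt_sq hr]



/-- helper: `exp x ≤ (1-x)⁻¹` for `0 ≤ x < 1`. -/
lemma exp_le_inv_one_sub {x : ℝ} (h0 : 0 ≤ x) (h1 : x < 1) : Real.exp x ≤ (1 - x)⁻¹ := by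
  have h2 : (1 : ℝ) - x ≤ Real.exp (-x) := by
    have := Real.add_one_le_exp (-x); linarith
  have h3 : 0 < 1 - x := by linarith
  have h4 : (1 - x) * Real.exp x ≤ 1 := by
    have := mul_le_mul_of_nonneg_right h2 (Real.exp_pos x).le
    rwa [← Real.exp_add, neg_add_cancel, Real.exp_zero] at this
  calc Real.exp x = ((1-x) * Real.exp x) * (1-x)⁻¹ := by field_simp
  _ ≤ 1 * (1-x)⁻¹ := by
      apply mul_le_mul_of_nonneg_right h4 (by positivity)
  _ = (1-x)⁻¹ := one_mul _

/-- The quantity in the induction. -/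
def G (a b : ℝ) : ℝ := ((2*a+1)/(8*(a+b))) ^ a * (Real.Gamma (a+b+1) / (Real.Gamma (a+1) * Real.Gamma (b+1)))

/-- log-convexity consequence. -/
lemma Gamma_sq_le {x : ℝ} (hx : 0 < x) :
    Real.Gamma (x+1) ^ 2 ≤ Real.Gamma (x+1/2) * Real.Gamma (x+3/2) := by
  have h := Real.convexOn_log_Gamma.2 (Set.mem_Ioi.2 (by linarith : (0:ℝ) < x + 1/2))
    (Set.mem_Ioi.2 (by linarith : (0:ℝ) < x + 3/2)) (by norm_num : (0:ℝ) ≤ (1:ℝ)/2)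
    (by norm_num : (0:ℝ) ≤ (1:ℝ)/2) (by norm_num)
  simp only [Function.comp_apply, smul_eq_mul] at h
  have harg : (1:ℝ)/2 * (x+1/2) + (1:ℝ)/2 * (x+3/2) = x + 1 := by ring
  rw [harg] at h
  have p1 : 0 < Real.Gamma (x+1) := Real.Gamma_pos_of_pos (by linarith)
  have p2 : 0 < Real.Gamma (x+1/2) := Real.Gamma_pos_of_pos (by linarith)
  have p3 : 0 < Real.Gamma (x+3/2) := Real.Gamma_pos_of_pos (by linarith)
  have := Real.exp_le_exp.2 (by linarith : 2 * Real.log (Real.Gamma (x+1)) ≤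
      Real.log (Real.Gamma (x+1/2)) + Real.log (Real.Gamma (x+3/2)))
  rw [Real.exp_add, Real.exp_log p2, Real.exp_log p3] at this
  calc Real.Gamma (x+1)^2 = Real.exp (2 * Real.log (Real.Gamma (x+1))) := by
        rw [mul_comm, Real.exp_mul, Real.exp_log p1, Real.rpow_two]
  _ ≤ _ := this

lemma num3 : Real.exp 1 * Real.exp (1/25) ≤ 3 := by
  have h1 : Real.exp (1/25 : ℝ) ≤ (1 - 1/25 : ℝ)⁻¹ := exp_le_inv_one_sub (by norm_num) (by norm_num)
  have h2 : Real.exp 1 < 2.7182818286 := Real.exp_one_lt_d9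
  nlinarith [Real.exp_pos (1/25 : ℝ), Real.exp_pos (1:ℝ)]

/-- Step of the induction. -/
lemma G_step {a b : ℝ} (ha : 1/2 ≤ a) (hb : 1/2 ≤ b) :
    G (a+1) b ≤ Real.exp (-(1/25)) * G a b := by
  set n := a + b with hn
  have hn1 : 1 ≤ n := by simp [hn]; linarith
  have hΓn : Real.Gamma (n+1+1) = (n+1) * Real.Gamma (n+1) := Real.Gamma_add_one (by linarith)
  have hΓa : Real.Gamma (a+1+1) = (a+1) * Real.Gamma (a+1) := Real.Gamma_add_one (by linarith)
  have pb : 0 < Real.Gamma (b+1) := Real.Gamma_pos_of_pos (by linarith)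
  have pa : 0 < Real.Gamma (a+1) := Real.Gamma_pos_of_pos (by linarith)
  have pn : 0 < Real.Gamma (n+1) := Real.Gamma_pos_of_pos (by linarith)
  -- base comparison
  have hbase : ((2*(a+1)+1)/(8*((a+1)+b))) ^ a ≤ Real.exp 1 * ((2*a+1)/(8*n)) ^ a := by
    have h1 : (2*(a+1)+1)/(8*((a+1)+b)) ≤ ((2*a+1)/(8*n)) * Real.exp (2/(2*a+1)) := by
      have e1 : (1 : ℝ) + 2/(2*a+1) ≤ Real.exp (2/(2*a+1)) := by
        have := Real.add_one_le_exp (2/(2*a+1)); linarith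
      have hpos : (0:ℝ) < 2*a+1 := by linarith
      have hnpos : (0:ℝ) < n := by linarith
      have key : (2*(a+1)+1)/(8*((a+1)+b)) ≤ ((2*a+1)/(8*n)) * (1 + 2/(2*a+1)) := by
        rw [div_le_iff₀ (by linarith)]
        have : ((2*a+1)/(8*n)) * (1 + 2/(2*a+1)) = (2*a+3)/(8*n) := by
          field_simp; ring
        rw [this, div_mul_eq_mul_div, le_div_iff₀ (by linarith)]
        nlinarith
      calc (2*(a+1)+1)/(8*((a+1)+b)) ≤ ((2*a+1)/(8*n)) * (1 + 2/(2*a+1)) := key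
      _ ≤ ((2*a+1)/(8*n)) * Real.exp (2/(2*a+1)) := by
          apply mul_le_mul_of_nonneg_left e1 (by positivity)
    have h0 : (0:ℝ) ≤ (2*(a+1)+1)/(8*((a+1)+b)) := by positivity
    have h2 := Real.rpow_le_rpow h0 h1 (by linarith : (0:ℝ) ≤ a)
    rw [Real.mul_rpow (by positivity) (Real.exp_pos _).le] at h2
    have h3 : Real.exp (2/(2*a+1)) ^ a = Real.exp (2/(2*a+1) * a) := (Real.exp_mul _ _).symm
    have h4 : Real.exp (2/(2*a+1) * a) ≤ Real.exp 1 := by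
      apply Real.exp_le_exp.2
      rw [div_mul_eq_mul_div, div_le_one (by linarith)]; linarith
    calc ((2*(a+1)+1)/(8*((a+1)+b))) ^ a ≤ ((2*a+1)/(8*n)) ^ a * Real.exp (2/(2*a+1)) ^ a := h2
    _ ≤ ((2*a+1)/(8*n)) ^ a * Real.exp 1 := by
        rw [h3]; exact mul_le_mul_of_nonneg_left h4 (by positivity)
    _ = Real.exp 1 * ((2*a+1)/(8*n)) ^ a := mul_comm _ _
  -- the scalar factor
  have hfac : (2*(a+1)+1)/(8*((a+1)+b)) * ((n+1)/(a+1)) ≤ 1/3 := by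
    have h1 : (2*(a+1)+1)/(8*((a+1)+b)) * ((n+1)/(a+1)) = (2*a+3)/(8*(a+1)) := by
      field_simp [hn]; ring
    rw [h1, div_le_div_iff₀ (by linarith) (by norm_num)]
    linarith
  -- put together
  have expand : G (a+1) b = ((2*(a+1)+1)/(8*((a+1)+b))) ^ (a+1) * ((n+1) * Real.Gamma (n+1) / ((a+1) * Real.Gamma (a+1) * Real.Gamma (b+1))) := by
    unfold G
    rw [show a + 1 + b + 1 = n + 1 + 1 by ring, hΓn, hΓa]
  have hx0 : (0:ℝ) < (2*(a+1)+1)/(8*((a+1)+b)) := by positivity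
  rw [expand, Real.rpow_add_one (ne_of_gt hx0)]
  have : ((2*(a+1)+1)/(8*((a+1)+b))) ^ a * ((2*(a+1)+1)/(8*((a+1)+b))) *
      ((n+1) * Real.Gamma (n+1) / ((a+1) * Real.Gamma (a+1) * Real.Gamma (b+1)))
      = (((2*(a+1)+1)/(8*((a+1)+b))) ^ a) * (((2*(a+1)+1)/(8*((a+1)+b))) * ((n+1)/(a+1))) *
        (Real.Gamma (n+1) / (Real.Gamma (a+1) * Real.Gamma (b+1))) := by
    field_simp
  rw [this]
  have hGpos : (0:ℝ) ≤ Real.Gamma (n+1) / (Real.Gamma (a+1) * Real.Gamma (b+1)) := by positivity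
  have step1 : (((2*(a+1)+1)/(8*((a+1)+b))) ^ a) * (((2*(a+1)+1)/(8*((a+1)+b))) * ((n+1)/(a+1)))
      ≤ (Real.exp 1 * ((2*a+1)/(8*n)) ^ a) * (1/3) := by
    apply mul_le_mul hbase hfac (by positivity)
    positivity
  have step2 : (Real.exp 1 * ((2*a+1)/(8*n)) ^ a) * (1/3) ≤ Real.exp (-(1/25)) * ((2*a+1)/(8*n)) ^ a := by
    have h3 : Real.exp 1 * (1/3 : ℝ) ≤ Real.exp (-(1/25)) := by
      have := num3
      have h25 : Real.exp (-(1/25 : ℝ)) * Real.exp (1/25 : ℝ) = 1 := by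
        rw [← Real.exp_add]; norm_num
      nlinarith [Real.exp_pos (-(1/25:ℝ)), Real.exp_pos ((1/25:ℝ))]
    calc (Real.exp 1 * ((2*a+1)/(8*n)) ^ a) * (1/3)
        = (Real.exp 1 * (1/3)) * ((2*a+1)/(8*n)) ^ a := by ring
    _ ≤ Real.exp (-(1/25)) * ((2*a+1)/(8*n)) ^ a := by
        apply mul_le_mul_of_nonneg_right h3 (by positivity)
  calc _ ≤ ((Real.exp 1 * ((2*a+1)/(8*n)) ^ a) * (1/3)) * (Real.Gamma (n+1) / (Real.Gamma (a+1) * Real.Gamma (b+1))) :=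
        mul_le_mul_of_nonneg_right step1 hGpos
  _ ≤ (Real.exp (-(1/25)) * ((2*a+1)/(8*n)) ^ a) * (Real.Gamma (n+1) / (Real.Gamma (a+1) * Real.Gamma (b+1))) :=
        mul_le_mul_of_nonneg_right step2 hGpos
  _ = Real.exp (-(1/25)) * G a b := by unfold G; ring



lemma G_base_half {b : ℝ} (hb : 1/2 ≤ b) : G (1/2) b ≤ Real.exp (-(1/50)*2) := by
  set n := 1/2 + b with hn
  have hn1 : 1 ≤ n := by rw [hn]; linarith
  have hΓ32 : Real.Gamma (1/2+1) = Real.sqrt π / 2 := by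
    rw [Real.Gamma_add_one (by norm_num), Real.Gamma_one_half_eq]; ring
  have hb1 : b + 1 = n + 1/2 := by rw [hn]; ring
  have hΓn32 : Real.Gamma (n+3/2) = (n+1/2) * Real.Gamma (n+1/2) := by
    rw [show n+3/2 = (n+1/2)+1 by ring, Real.Gamma_add_one (by linarith)]
  have hsq := Gamma_sq_le (show (0:ℝ) < n by linarith)
  rw [hΓn32] at hsq
  have p12 : 0 < Real.Gamma (n+1/2) := Real.Gamma_pos_of_pos (by linarith)
  have pn1 : 0 < Real.Gamma (n+1) := Real.Gamma_pos_of_pos (by linarith)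
  have hπ : (0:ℝ) < π := Real.pi_pos
  have hsπ : Real.sqrt π ^ 2 = π := Real.sq_sqrt hπ.le
  -- G value
  have hGval : G (1/2) b = (1/(4*n)) ^ ((1:ℝ)/2) * (Real.Gamma (n+1) / ((Real.sqrt π / 2) * Real.Gamma (n+1/2))) := by
    unfold G
    rw [hΓ32, hb1, show (1:ℝ)/2 + b + 1 = n + 1 by rw [hn],
      show (2*(1/2)+1)/(8*(1/2+b)) = 1/(4*n) by rw [hn]; field_simp; ring ]
  have hG0 : 0 ≤ G (1/2) b := by
    rw [hGval]; positivity
  have hE0 : 0 < Real.exp (-(1/50)*2) := Real.exp_pos _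
  rw [← pow_le_pow_iff_left₀ hG0 hE0.le (two_ne_zero)]
  have hx : ((1/(4*n) : ℝ) ^ ((1:ℝ)/2))^2 = 1/(4*n) := by
    rw [← Real.rpow_natCast ((1/(4*n) : ℝ) ^ ((1:ℝ)/2)) 2,
      ← Real.rpow_mul (by positivity : (0:ℝ) ≤ 1/(4*n))]
    norm_num
  have hGsq : G (1/2) b ^ 2 = (1/(4*n)) * (Real.Gamma (n+1)^2 / ((π/4) * Real.Gamma (n+1/2)^2)) := by
    rw [hGval, mul_pow, hx, div_pow, mul_pow, div_pow, hsπ]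
    norm_num
  rw [hGsq]
  have hstep : Real.Gamma (n+1)^2 / ((π/4) * Real.Gamma (n+1/2)^2) ≤ (n+1/2)*(4/π) := by
    rw [div_le_iff₀ (by positivity)]
    calc Real.Gamma (n+1)^2 ≤ (n+1/2) * Real.Gamma (n+1/2)^2 := by nlinarith
    _ ≤ _ := by
        rw [show (n+1/2)*(4/π)*(π/4*Real.Gamma (n+1/2)^2) = (n+1/2)*Real.Gamma (n+1/2)^2 by field_simp]
  calc (1/(4*n)) * (Real.Gamma (n+1)^2 / ((π/4) * Real.Gamma (n+1/2)^2))
      ≤ (1/(4*n)) * ((n+1/2)*(4/π)) := by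
        apply mul_le_mul_of_nonneg_left hstep (by positivity)
  _ = (1 + 1/(2*n))/π := by field_simp
  _ ≤ (3/2)/π := by
      have h : 1/(2*n) ≤ 1/2 := by
        rw [div_le_div_iff₀ (by linarith) (by norm_num)]; linarith
      gcongr
      linarith
  _ ≤ Real.exp (-(1/50)*2) ^ 2 := by
      have h1 : Real.exp (-(1/50)*2) ^ 2 = Real.exp (-(2/25)) := by
        rw [← Real.exp_nat_mul]; norm_num
      rw [h1]
      have h2 : Real.exp (2/25 : ℝ) ≤ (1 - 2/25 : ℝ)⁻¹ := exp_le_inv_one_sub (by norm_num) (by norm_num)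
      have h3 : Real.exp (-(2/25:ℝ)) * Real.exp (2/25:ℝ) = 1 := by rw [← Real.exp_add]; norm_num
      have hπ3 : (3.141592 : ℝ) ≤ π := Real.pi_gt_d6.le
      have e1 : (23/25 : ℝ) ≤ Real.exp (-(2/25:ℝ)) := by
        nlinarith [Real.exp_pos (-(2/25:ℝ)), Real.exp_pos ((2/25:ℝ))]
      rw [div_le_iff₀ hπ]
      nlinarith [Real.exp_pos (-(2/25:ℝ))]

lemma G_base_one {b : ℝ} (hb : 1/2 ≤ b) : G 1 b ≤ Real.exp (-(1/50)*3) := by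
  have pb : 0 < Real.Gamma (b+1) := Real.Gamma_pos_of_pos (by linarith)
  have hGval : G 1 b = 3/8 := by
    unfold G
    rw [show (1:ℝ)+b+1 = (b+1)+1 by ring, Real.Gamma_add_one (by linarith),
      show (1:ℝ)+1 = (2:ℝ) by norm_num, Real.Gamma_two, Real.rpow_one]
    field_simp
    ring
  rw [hGval]
  have h2 : Real.exp (3/50 : ℝ) ≤ (1 - 3/50 : ℝ)⁻¹ := exp_le_inv_one_sub (by norm_num) (by norm_num)
  have h3 : Real.exp (-(1/50:ℝ)*3) * Real.exp (3/50:ℝ) = 1 := by rw [← Real.exp_add]; norm_num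
  nlinarith [Real.exp_pos (-(1/50:ℝ)*3), Real.exp_pos ((3/50:ℝ))]

lemma G_ladder (k : ℕ) {a b : ℝ} (ha : a = 1/2 ∨ a = 1) (hb : 1/2 ≤ b) :
    G (a + k) b ≤ Real.exp (-(1/50)*(2*(a+k)+1)) := by
  induction k with
  | zero =>
      simp only [Nat.cast_zero, add_zero]
      rcases ha with rfl | rfl
      · have := G_base_half hb; convert this using 2; ring
      · have := G_base_one hb; convert this using 2; ring
  | succ k ih =>
      have ha' : 1/2 ≤ a + k := by
        rcases ha with rfl | rfl
        · have : (0:ℝ) ≤ k := Nat.cast_nonneg k; linarith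
        · have : (0:ℝ) ≤ k := Nat.cast_nonneg k; linarith
      have step := G_step ha' hb
      have : G (a + (k+1:ℕ)) b = G ((a + k) + 1) b := by
        push_cast; ring_nf
      rw [this]
      calc G ((a + k) + 1) b ≤ Real.exp (-(1/25)) * G (a+k) b := step
      _ ≤ Real.exp (-(1/25)) * Real.exp (-(1/50)*(2*(a+k)+1)) := by
          apply mul_le_mul_of_nonneg_left ih (Real.exp_pos _).le
      _ = Real.exp (-(1/50)*(2*(a+(k+1:ℕ))+1)) := by
          rw [← Real.exp_add]; push_cast; ring_nf

/-- The main analytic inequality. -/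
lemma analytic_key (m D : ℕ) (hm : 1 ≤ m) (hD : m + 1 ≤ D) :
    (((m:ℝ)+1)/(4*D)) ^ ((m:ℝ)/2) *
      (Real.Gamma ((D:ℝ)/2+1) / (Real.Gamma ((m:ℝ)/2+1) * Real.Gamma (((D:ℝ)-m)/2+1)))
      ≤ Real.exp (-(1/50)*((m:ℝ)+1)) := by
  set a : ℝ := (m:ℝ)/2 with hadef
  set b : ℝ := ((D:ℝ)-m)/2 with hbdef
  have hDm : (m:ℝ) + 1 ≤ (D:ℝ) := by exact_mod_cast hD
  have hb : 1/2 ≤ b := by rw [hbdef]; linarith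
  have hG : G a b = (((m:ℝ)+1)/(4*D)) ^ ((m:ℝ)/2) *
      (Real.Gamma ((D:ℝ)/2+1) / (Real.Gamma ((m:ℝ)/2+1) * Real.Gamma (((D:ℝ)-m)/2+1))) := by
    unfold G
    rw [hadef, hbdef]
    norm_num
    rw [show 2*((m:ℝ)/2)+1 = (m:ℝ)+1 by ring,
      show (8:ℝ)*((m:ℝ)/2 + ((D:ℝ)-m)/2) = 4*D by ring,
      show (m:ℝ)/2 + ((D:ℝ)-m)/2 + 1 = (D:ℝ)/2+1 by ring]
  rw [← hG]
  have key : ∃ (a₀ : ℝ) (k : ℕ), (a₀ = 1/2 ∨ a₀ = 1) ∧ a = a₀ + k := by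
    rcases Nat.even_or_odd m with ⟨k, hk⟩ | ⟨k, hk⟩
    · refine ⟨1, k - 1, Or.inr rfl, ?_⟩
      have hk1 : 1 ≤ k := by omega
      have hc : ((k - 1 : ℕ) : ℝ) = (k:ℝ) - 1 := by
        simpa using (Nat.cast_sub hk1 : ((k-1:ℕ):ℝ) = _)
      rw [hadef, hc]
      have hm2 : (m:ℝ) = 2*k := by rw [hk]; push_cast; ring
      rw [hm2]; ring
    · refine ⟨1/2, k, Or.inl rfl, ?_⟩
      have hm2 : (m:ℝ) = 2*k+1 := by rw [hk]; push_cast; ring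
      rw [hadef, hm2]; ring
  obtain ⟨a₀, k, ha₀, hak⟩ := key
  have := G_ladder k ha₀ hb
  rw [← hak] at this
  calc G a b ≤ Real.exp (-(1/50)*(2*a+1)) := this
  _ = Real.exp (-(1/50)*((m:ℝ)+1)) := by rw [hadef]; ring_nf




lemma normsq {ι : Type*} [Fintype ι] (z : EuclideanSpace ℝ ι) : ‖z‖^2 = ∑ i, z i ^ 2 := by
  rw [EuclideanSpace.norm_eq, Real.sq_sqrt (by positivity)]
  exact Finset.sum_congr rfl fun i _ => by rw [Real.norm_eq_abs, sq_abs]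

lemma innerE {ι : Type*} [Fintype ι] (x y : EuclideanSpace ℝ ι) :
    (inner ℝ x y : ℝ) = ∑ i, x i * y i := by
  simp [PiLp.inner_apply, RCLike.inner_apply, conj_trivial, mul_comm]

/-- Volume bound for a "cylinder" region given an adapted orthonormal basis. -/
lemma proj_bound {D : ℕ} {K₁ K₂ : Type} [Fintype K₁] [Fintype K₂]
    (b : OrthonormalBasis (K₁ ⊕ K₂) ℝ (EuclideanSpace ℝ (Fin D))) (ε : ℝ) (hε : 0 ≤ ε) :
    volume {x : EuclideanSpace ℝ (Fin D) |
        (∑ k : K₁, (inner ℝ (b (.inl k)) x : ℝ)^2) ≤ ε^2 ∧ ‖x‖ ≤ 1}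
      ≤ volume (closedBall (0 : EuclideanSpace ℝ K₁) ε)
        * volume (closedBall (0 : EuclideanSpace ℝ K₂) 1) := by
  classical
  set A : Set (K₁ → ℝ) := {z | (∑ k, z k^2) ≤ ε^2} with hA
  set B : Set (K₂ → ℝ) := {z | (∑ i, z i^2) ≤ 1} with hB
  have hAmeas : MeasurableSet A :=
    measurableSet_le (Finset.univ.measurable_sum fun k _ => (measurable_pi_apply k).pow_const 2)
      measurable_const
  have hBmeas : MeasurableSet B :=
    measurableSet_le (Finset.univ.measurable_sum fun k _ => (measurable_pi_apply k).pow_const 2)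
      measurable_const
  set eqv := MeasurableEquiv.sumPiEquivProdPi (fun _ : K₁ ⊕ K₂ => ℝ) with heqv
  set meqv := (MeasurableEquiv.toLp 2 ((K₁ ⊕ K₂) → ℝ)).symm with hmeqv
  have hsub : {x : EuclideanSpace ℝ (Fin D) |
        (∑ k : K₁, (inner ℝ (b (.inl k)) x : ℝ)^2) ≤ ε^2 ∧ ‖x‖ ≤ 1}
      ⊆ ⇑b.repr ⁻¹' (⇑meqv ⁻¹' (⇑eqv ⁻¹' (A ×ˢ B))) := by
    rintro x ⟨h1, h2⟩
    have hmem : eqv (meqv (b.repr x)) = (fun k => b.repr x (.inl k), fun i => b.repr x (.inr i)) := rfl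
    simp only [Set.mem_preimage, hmem, Set.mem_prod, hA, hB, Set.mem_setOf_eq]
    constructor
    · calc ∑ k : K₁, (b.repr x (.inl k))^2
          = ∑ k : K₁, (inner ℝ (b (.inl k)) x : ℝ)^2 :=
            Finset.sum_congr rfl fun k _ => by rw [b.repr_apply_apply]
      _ ≤ ε^2 := h1
    · calc ∑ i : K₂, (b.repr x (.inr i))^2
          ≤ ∑ j : K₁ ⊕ K₂, (b.repr x j)^2 := by
            rw [Fintype.sum_sum_type]
            exact le_add_of_nonneg_left (by positivity)
      _ = ‖b.repr x‖^2 := (normsq _).symm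
      _ = ‖x‖^2 := by rw [b.repr.norm_map]
      _ ≤ 1 := pow_le_one₀ (norm_nonneg x) h2
  have hABmeas : MeasurableSet (A ×ˢ B) := hAmeas.prod hBmeas
  calc volume {x : EuclideanSpace ℝ (Fin D) |
        (∑ k : K₁, (inner ℝ (b (.inl k)) x : ℝ)^2) ≤ ε^2 ∧ ‖x‖ ≤ 1}
      ≤ volume (⇑b.repr ⁻¹' (⇑meqv ⁻¹' (⇑eqv ⁻¹' (A ×ˢ B)))) := measure_mono hsub
  _ = volume (⇑meqv ⁻¹' (⇑eqv ⁻¹' (A ×ˢ B))) :=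
      b.measurePreserving_repr.measure_preimage
        (((hABmeas.preimage eqv.measurable).preimage meqv.measurable).nullMeasurableSet)
  _ = volume (⇑eqv ⁻¹' (A ×ˢ B)) :=
      (EuclideanSpace.volume_preserving_symm_measurableEquiv_toLp _).measure_preimage
        ((hABmeas.preimage eqv.measurable).nullMeasurableSet)
  _ = volume (A ×ˢ B) :=
      (volume_measurePreserving_sumPiEquivProdPi _).measure_preimage hABmeas.nullMeasurableSet
  _ = volume A * volume B := by
      rw [MeasureTheory.Measure.volume_eq_prod, Measure.prod_prod]
  _ ≤ volume (closedBall (0 : EuclideanSpace ℝ K₁) ε)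
        * volume (closedBall (0 : EuclideanSpace ℝ K₂) 1) := by
      have hA' : volume A = volume ((MeasurableEquiv.toLp 2 (K₁ → ℝ)).symm ⁻¹' A) :=
        ((EuclideanSpace.volume_preserving_symm_measurableEquiv_toLp K₁).measure_preimage
          hAmeas.nullMeasurableSet).symm
      have hB' : volume B = volume ((MeasurableEquiv.toLp 2 (K₂ → ℝ)).symm ⁻¹' B) :=
        ((EuclideanSpace.volume_preserving_symm_measurableEquiv_toLp K₂).measure_preimage
          hBmeas.nullMeasurableSet).symm
      rw [hA', hB']
      apply mul_le_mul'
      · apply measure_mono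
        intro z hz
        simp only [Set.mem_preimage, hA, Set.mem_setOf_eq] at hz
        rw [mem_closedBall_zero_iff]
        calc ‖z‖ = Real.sqrt (∑ i, z i^2) := by
              rw [EuclideanSpace.norm_eq]
              congr 1
              exact Finset.sum_congr rfl fun i _ => by rw [Real.norm_eq_abs, sq_abs]
        _ ≤ Real.sqrt (ε^2) := Real.sqrt_le_sqrt hz
        _ = ε := Real.sqrt_sq hε
      · apply measure_mono
        intro z hz
        simp only [Set.mem_preimage, hB, Set.mem_setOf_eq] at hz
        rw [mem_closedBall_zero_iff]
        calc ‖z‖ = Real.sqrt (∑ i, z i^2) := by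
              rw [EuclideanSpace.norm_eq]
              congr 1
              exact Finset.sum_congr rfl fun i _ => by rw [Real.norm_eq_abs, sq_abs]
        _ ≤ Real.sqrt 1 := Real.sqrt_le_sqrt hz
        _ = 1 := Real.sqrt_one



lemma cylinder_bound (D m : ℕ) (hm : 1 ≤ m) (hdD : m + 1 ≤ D)
    (ι : Fin (m+1) → Fin D) (hι : Function.Injective ι) (ε : ℝ) (hε : 0 ≤ ε) :
    volume {x : EuclideanSpace ℝ (Fin D) |
        SensTF.enorm (fun a => x (ι a) - (∑ b, x (ι b)) / ((m+1 : ℕ) : ℝ)) ≤ ε ∧ ‖x‖ ≤ 1}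
      ≤ (ENNReal.ofReal ε)^m * ENNReal.ofReal (Real.sqrt π ^ m / Real.Gamma ((m:ℝ)/2+1))
        * ENNReal.ofReal (Real.sqrt π ^ (D - m) / Real.Gamma (((D-m : ℕ):ℝ)/2+1)) := by
  classical
  have hm1pos : (0:ℝ) < (m:ℝ)+1 := by positivity
  -- the unit vector with equal coordinates
  set u : EuclideanSpace ℝ (Fin (m+1)) :=
    WithLp.toLp 2 (fun _ => (Real.sqrt ((m:ℝ)+1))⁻¹ : Fin (m+1) → ℝ) with hu
  have hc2 : ((Real.sqrt ((m:ℝ)+1))⁻¹)^2 = ((m:ℝ)+1)⁻¹ := by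
    rw [← Real.sqrt_inv, Real.sq_sqrt (by positivity)]
  have hunorm : ‖u‖ = 1 := by
    rw [EuclideanSpace.norm_eq]
    have : ∀ a : Fin (m+1), ‖u a‖^2 = ((m:ℝ)+1)⁻¹ := fun a => by
      rw [Real.norm_eq_abs, sq_abs, hu]; exact hc2
    rw [Finset.sum_congr rfl fun a _ => this a, Finset.sum_const, Finset.card_univ,
      Fintype.card_fin, nsmul_eq_mul]
    rw [show ((m+1:ℕ):ℝ) * ((m:ℝ)+1)⁻¹ = 1 by push_cast; field_simp]
    exact Real.sqrt_one
  -- extend to an orthonormal basis of ℝ^{m+1}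
  have hortho : Orthonormal ℝ (Set.restrict {(0 : Fin (m+1))} (fun _ => u)) := by
    constructor
    · intro i; exact hunorm
    · intro i j hij
      exact absurd (Subtype.ext ((i.2 : (i:Fin (m+1)) ∈ ({0} : Set (Fin (m+1)))).trans
        ((j.2 : (j:Fin (m+1)) ∈ ({0} : Set (Fin (m+1)))).symm))) hij
  have hcard1 : Module.finrank ℝ (EuclideanSpace ℝ (Fin (m+1))) = Fintype.card (Fin (m+1)) := by
    simp [finrank_euclideanSpace]
  obtain ⟨h, hh0⟩ := hortho.exists_orthonormalBasis_extension_of_card_eq hcard1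
  have hh0' : h 0 = u := hh0 0 rfl
  -- the embedding ℝ^{m+1} → ℝ^D
  set RT : EuclideanSpace ℝ (Fin (m+1)) → EuclideanSpace ℝ (Fin D) :=
    fun y => WithLp.toLp 2 (Function.extend ι y.ofLp (fun _ => (0:ℝ)) : Fin D → ℝ) with hRT
  have hRTa : ∀ y a, RT y (ι a) = y a := fun y a => hι.extend_apply y.ofLp (fun _ => (0:ℝ)) a
  have hRTn : ∀ y j, j ∉ Set.range ι → RT y j = 0 := fun y j hj =>
    Function.extend_apply' y.ofLp (fun _ => (0:ℝ)) j (by simpa [Set.mem_range] using hj)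
  have hRTsum : ∀ (y : EuclideanSpace ℝ (Fin (m+1))) (x : EuclideanSpace ℝ (Fin D)),
      ∑ j, RT y j * x j = ∑ a, y a * x (ι a) := by
    intro y x
    rw [← Finset.sum_subset (Finset.subset_univ ((Finset.univ : Finset (Fin (m+1))).image ι))
      (fun j _ hj => by
        rw [hRTn y j (by simpa using hj), zero_mul])]
    rw [Finset.sum_image (fun a _ b _ hab => hι hab)]
    exact Finset.sum_congr rfl fun a _ => by rw [hRTa]
  have hRTinner : ∀ (y : EuclideanSpace ℝ (Fin (m+1))) (x : EuclideanSpace ℝ (Fin D)),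
      (inner ℝ (RT y) x : ℝ) = ∑ a, y a * x (ι a) := by
    intro y x; rw [innerE, hRTsum]
  have hRTRT : ∀ (y z : EuclideanSpace ℝ (Fin (m+1))),
      (inner ℝ (RT y) (RT z) : ℝ) = (inner ℝ y z : ℝ) := by
    intro y z; rw [hRTinner, innerE]
    exact Finset.sum_congr rfl fun a _ => by rw [hRTa]
  -- index types
  have hJmem : ∀ j : Fin D, j ∈ Set.range ι ↔ j ∈ ((Finset.univ : Finset (Fin (m+1))).image ι) := by
    intro j; simp [Set.mem_range]
  -- f family
  set f : (Fin m ⊕ (Unit ⊕ {j : Fin D // j ∉ Set.range ι})) → EuclideanSpace ℝ (Fin D) :=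
    Sum.elim (fun k => RT (h k.succ))
      (Sum.elim (fun _ => RT (h 0)) (fun j => EuclideanSpace.single j.1 1)) with hf
  have hsingle : ∀ (j : Fin D) (x : EuclideanSpace ℝ (Fin D)),
      (inner ℝ (EuclideanSpace.single j (1:ℝ)) x : ℝ) = x j := by
    intro j x; rw [innerE]
    simp [EuclideanSpace.single_apply]
  have hhinner : ∀ k k' : Fin (m+1), (inner ℝ (h k) (h k') : ℝ) = if k = k' then 1 else 0 :=
    orthonormal_iff_ite.1 h.orthonormal
  have horthf : Orthonormal ℝ f := by
    rw [orthonormal_iff_ite]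
    rintro (k | i | j) (k' | i' | j') <;>
      simp only [hf, Sum.elim_inl, Sum.elim_inr, Sum.inl.injEq, Sum.inr.injEq]
    · rw [hRTRT, hhinner]
      simp [Fin.succ_inj]
    · rw [hRTRT, hhinner]
      simp [Fin.succ_ne_zero]
    · rw [real_inner_comm, hsingle, hRTn _ _ j'.2]
      simp
    · rw [hRTRT, hhinner]
      simp [(Fin.succ_ne_zero k').symm, Ne.symm (Fin.succ_ne_zero k')]
    · rw [hRTRT, hhinner]
      simp
    · rw [real_inner_comm, hsingle, hRTn _ _ j'.2]
      simp
    · rw [hsingle, hRTn _ _ j.2]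
      simp
    · rw [hsingle, hRTn _ _ j.2]
      simp
    · rw [hsingle, EuclideanSpace.single_apply]
      have : (j = j') ↔ (j.1 = j'.1) := ⟨fun h => by rw [h], fun h => Subtype.ext h⟩
      simp [this, eq_comm]
  have hcardJ : Fintype.card {j : Fin D // j ∉ Set.range ι} = D - (m+1) := by
    have h1 : Fintype.card {j : Fin D // j ∈ Set.range ι} = m + 1 := by
      rw [Fintype.card_congr (Equiv.subtypeEquivRight hJmem)]
      rw [Fintype.card_coe, Finset.card_image_of_injective _ hι, Finset.card_univ,
        Fintype.card_fin]
    have := Fintype.card_subtype_compl (fun j : Fin D => j ∈ Set.range ι)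
    rw [this, h1, Fintype.card_fin]
  have hcardf : Fintype.card (Fin m ⊕ (Unit ⊕ {j : Fin D // j ∉ Set.range ι}))
      = Module.finrank ℝ (EuclideanSpace ℝ (Fin D)) := by
    rw [Fintype.card_sum, Fintype.card_sum, Fintype.card_fin, Fintype.card_unit, hcardJ,
      finrank_euclideanSpace_fin]
    omega
  have : Nonempty (Fin m ⊕ (Unit ⊕ {j : Fin D // j ∉ Set.range ι})) := ⟨.inr (.inl ())⟩
  obtain ⟨b, hb⟩ : ∃ b : OrthonormalBasis (Fin m ⊕ (Unit ⊕ {j : Fin D // j ∉ Set.range ι})) ℝ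
      (EuclideanSpace ℝ (Fin D)), ∀ i, b i = f i := by
    refine ⟨(basisOfOrthonormalOfCardEqFinrank horthf hcardf).toOrthonormalBasis ?_, ?_⟩
    · rw [coe_basisOfOrthonormalOfCardEqFinrank]; exact horthf
    · intro i
      rw [Module.Basis.coe_toOrthonormalBasis, coe_basisOfOrthonormalOfCardEqFinrank]
  -- the key identity
  have key : ∀ x : EuclideanSpace ℝ (Fin D),
      (SensTF.enorm (fun a => x (ι a) - (∑ b, x (ι b)) / ((m+1 : ℕ) : ℝ)))^2
        = ∑ k : Fin m, ((inner ℝ (f (.inl k)) x : ℝ))^2 := by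
    intro x
    set w : EuclideanSpace ℝ (Fin (m+1)) := WithLp.toLp 2 (fun a => x (ι a) : Fin (m+1) → ℝ) with hw
    set s : ℝ := ∑ a, x (ι a) with hs
    have hSig : ∀ k, (inner ℝ (RT (h k)) x : ℝ) = (inner ℝ (h k) w : ℝ) := by
      intro k; rw [hRTinner, innerE]
    have parseval : ∑ k : Fin (m+1), (inner ℝ (h k) w : ℝ)^2 = ‖w‖^2 := by
      calc ∑ k : Fin (m+1), (inner ℝ (h k) w : ℝ)^2 = ∑ k, (h.repr w k)^2 :=
            Finset.sum_congr rfl fun k _ => by rw [h.repr_apply_apply]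
      _ = ‖h.repr w‖^2 := (normsq _).symm
      _ = ‖w‖^2 := by rw [LinearIsometryEquiv.norm_map]
    have h0w : (inner ℝ (h 0) w : ℝ) = (Real.sqrt ((m:ℝ)+1))⁻¹ * s := by
      rw [hh0', innerE, ← Finset.mul_sum]
    have h0sq : (inner ℝ (h 0) w : ℝ)^2 = s^2/((m:ℝ)+1) := by
      rw [h0w, mul_pow, hc2]; ring
    have sumsucc := Fin.sum_univ_succ (fun k => (inner ℝ (h k) w : ℝ)^2)
    have hLHS : (SensTF.enorm (fun a => x (ι a) - (∑ b, x (ι b)) / ((m+1 : ℕ) : ℝ)))^2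
        = ∑ a : Fin (m+1), (x (ι a) - s/((m:ℝ)+1))^2 := by
      unfold SensTF.enorm
      rw [Real.sq_sqrt (by positivity)]
      exact Finset.sum_congr rfl fun a _ => by push_cast; rfl
    have expand : ∑ a : Fin (m+1), (x (ι a) - s/((m:ℝ)+1))^2
        = (∑ a, x (ι a)^2) - s^2/((m:ℝ)+1) := by
      have e1 : ∀ a : Fin (m+1), (x (ι a) - s/((m:ℝ)+1))^2
          = x (ι a)^2 - 2*(s/((m:ℝ)+1))*x (ι a) + (s/((m:ℝ)+1))^2 := fun a => by ring
      rw [Finset.sum_congr rfl (fun a _ => e1 a), Finset.sum_add_distrib,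
        Finset.sum_sub_distrib, ← Finset.mul_sum, Finset.sum_const, Finset.card_univ,
        Fintype.card_fin, ← hs]
      have : ((m:ℝ)+1) ≠ 0 := by positivity
      rw [nsmul_eq_mul]; push_cast
      field_simp
      ring
    have hwnorm : ‖w‖^2 = ∑ a, x (ι a)^2 := normsq w
    have hfk : ∀ k : Fin m, (inner ℝ (f (.inl k)) x : ℝ) = (inner ℝ (h k.succ) w : ℝ) := by
      intro k; rw [hf]; exact hSig k.succ
    rw [hLHS, expand,
      show ∑ k : Fin m, ((inner ℝ (f (.inl k)) x : ℝ))^2 = ∑ k : Fin m, (inner ℝ (h k.succ) w : ℝ)^2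
        from Finset.sum_congr rfl fun k _ => by rw [hfk k]]
    rw [parseval, hwnorm, h0sq] at sumsucc
    linarith
  -- apply proj_bound
  have hNE1 : Nonempty (Fin m) := ⟨⟨0, hm⟩⟩
  have bound := proj_bound b ε hε
  have hsub2 : {x : EuclideanSpace ℝ (Fin D) |
        SensTF.enorm (fun a => x (ι a) - (∑ b, x (ι b)) / ((m+1 : ℕ) : ℝ)) ≤ ε ∧ ‖x‖ ≤ 1}
      ⊆ {x : EuclideanSpace ℝ (Fin D) |
        (∑ k : Fin m, (inner ℝ (b (.inl k)) x : ℝ)^2) ≤ ε^2 ∧ ‖x‖ ≤ 1} := by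
    rintro x ⟨h1, h2⟩
    refine ⟨?_, h2⟩
    have : ∑ k : Fin m, (inner ℝ (b (.inl k)) x : ℝ)^2
        = ∑ k : Fin m, (inner ℝ (f (.inl k)) x : ℝ)^2 :=
      Finset.sum_congr rfl fun k _ => by rw [hb]
    rw [this, ← key x]
    have h0 : 0 ≤ SensTF.enorm (fun a => x (ι a) - (∑ b, x (ι b)) / ((m+1 : ℕ) : ℝ)) :=
      Real.sqrt_nonneg _
    exact pow_le_pow_left₀ h0 h1 2
  -- volumes of the balls
  have hvol1 : volume (closedBall (0 : EuclideanSpace ℝ (Fin m)) ε)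
      = (ENNReal.ofReal ε)^m * ENNReal.ofReal (Real.sqrt π ^ m / Real.Gamma ((m:ℝ)/2+1)) := by
    rw [EuclideanSpace.volume_closedBall, Fintype.card_fin]
  have hcardK2 : Fintype.card (Unit ⊕ {j : Fin D // j ∉ Set.range ι}) = D - m := by
    rw [Fintype.card_sum, Fintype.card_unit, hcardJ]; omega
  have hvol2 : volume (closedBall (0 : EuclideanSpace ℝ (Unit ⊕ {j : Fin D // j ∉ Set.range ι})) 1)
      = ENNReal.ofReal (Real.sqrt π ^ (D - m) / Real.Gamma (((D-m : ℕ):ℝ)/2+1)) := by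
    rw [EuclideanSpace.volume_closedBall, hcardK2, ENNReal.ofReal_one, one_pow, one_mul]
  calc volume {x : EuclideanSpace ℝ (Fin D) |
        SensTF.enorm (fun a => x (ι a) - (∑ b, x (ι b)) / ((m+1 : ℕ) : ℝ)) ≤ ε ∧ ‖x‖ ≤ 1}
      ≤ volume {x : EuclideanSpace ℝ (Fin D) |
        (∑ k : Fin m, (inner ℝ (b (.inl k)) x : ℝ)^2) ≤ ε^2 ∧ ‖x‖ ≤ 1} := measure_mono hsub2
  _ ≤ volume (closedBall (0 : EuclideanSpace ℝ (Fin m)) ε)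
        * volume (closedBall (0 : EuclideanSpace ℝ (Unit ⊕ {j : Fin D // j ∉ Set.range ι})) 1) :=
      bound
  _ = _ := by rw [hvol1, hvol2]


end S19

/-- concentration for centered coordinate-restrictions of a random sphere
point. There is an absolute constant `c > 0` such that for all `D ≥ d ≥ 2` and `ρ > 0`:
if `Δ = ρ • v` with `v` uniform on the unit sphere of `ℝ^D` and `Δ′` is the restriction of
`Δ` to `d` fixed coordinates, then
`P(‖Δ′ − mean(Δ′)·𝟙_d‖₂ ≤ (ρ/2)·√(d/D)) ≤ exp(−c·d)`. -/
theorem statement19 :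
    ∃ c > (0 : ℝ), ∀ D d : ℕ, 2 ≤ d → d ≤ D → ∀ ρ : ℝ, 0 < ρ →
      ∀ ι : Fin d → Fin D, Function.Injective ι →
        unifSphere (Fin D)
          {v : Metric.sphere (0 : EuclideanSpace ℝ (Fin D)) 1 |
            SensTF.enorm (fun a : Fin d =>
                (ρ • (v : EuclideanSpace ℝ (Fin D))) (ι a) -
                  (∑ b : Fin d, (ρ • (v : EuclideanSpace ℝ (Fin D))) (ι b)) / d) ≤
              (ρ / 2) * Real.sqrt (d / D)} ≤
          ENNReal.ofReal (Real.exp (-(c * d))) := by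
  refine ⟨1/50, by norm_num, ?_⟩
  intro D d hd2 hdD ρ hρ ι hι
  obtain ⟨m, rfl⟩ : ∃ m, d = m + 1 := ⟨d - 1, by omega⟩
  have hm : 1 ≤ m := by omega
  have hDpos : 0 < D := by omega
  have hNE : Nonempty (Fin D) := ⟨⟨0, hDpos⟩⟩
  set ε : ℝ := 1/2 * Real.sqrt (((m+1:ℕ):ℝ)/((D:ℕ):ℝ)) with hε
  have hε0 : 0 ≤ ε := by positivity
  set N : EuclideanSpace ℝ (Fin D) → ℝ :=
    fun x => SensTF.enorm (fun a => x (ι a) - (∑ b, x (ι b)) / ((m+1 : ℕ) : ℝ)) with hN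
  have hN0 : ∀ x, 0 ≤ N x := fun x => S19.enorm_nonneg _
  -- scaling
  have hscale : ∀ (r : ℝ), 0 ≤ r → ∀ x : EuclideanSpace ℝ (Fin D),
      SensTF.enorm (fun a => (r • x) (ι a) - (∑ b, (r • x) (ι b)) / ((m+1:ℕ):ℝ)) = r * N x := by
    intro r hr x
    have hfun : (fun a : Fin (m+1) => (r • x) (ι a) - (∑ b, (r • x) (ι b)) / ((m+1:ℕ):ℝ))
        = fun a => r * (x (ι a) - (∑ b, x (ι b)) / ((m+1:ℕ):ℝ)) := by
      funext a
      have hx : ∀ j, (r • x) j = r * x j := fun j => rfl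
      simp only [hx, ← Finset.mul_sum]
      ring
    rw [hfun, S19.enorm_smul r hr, hN]
  -- the event set
  have hSet : {v : Metric.sphere (0 : EuclideanSpace ℝ (Fin D)) 1 |
            SensTF.enorm (fun a : Fin (m+1) =>
                (ρ • (v : EuclideanSpace ℝ (Fin D))) (ι a) -
                  (∑ b : Fin (m+1), (ρ • (v : EuclideanSpace ℝ (Fin D))) (ι b)) / (m+1:ℕ)) ≤
              (ρ / 2) * Real.sqrt ((m+1:ℕ) / D)}
      = {v : Metric.sphere (0 : EuclideanSpace ℝ (Fin D)) 1 | N ↑v ≤ ε} := by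
    ext v
    simp only [Set.mem_setOf_eq]
    rw [hscale ρ hρ.le ↑v,
      show (ρ/2) * Real.sqrt ((m+1:ℕ) / D) = ρ * ε by rw [hε]; ring]
    exact mul_le_mul_iff_right₀ hρ
  rw [hSet]
  -- measurability
  have hcontN : Continuous N := by
    rw [hN]
    unfold SensTF.enorm
    apply Continuous.sqrt
    apply continuous_finset_sum
    intro a _
    exact (((EuclideanSpace.proj (ι a)).continuous).sub
      ((continuous_finset_sum _ fun b _ => (EuclideanSpace.proj (ι b)).continuous).div_const _)).pow 2
  have hSmeas : MeasurableSet {v : Metric.sphere (0 : EuclideanSpace ℝ (Fin D)) 1 | N ↑v ≤ ε} :=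
    measurableSet_le ((hcontN.comp continuous_subtype_val).measurable) measurable_const
  have hdim : Module.finrank ℝ (EuclideanSpace ℝ (Fin D)) = D := finrank_euclideanSpace_fin
  -- cone containment
  have hcone : Set.Ioo (0:ℝ) 1 • (Subtype.val '' {v : Metric.sphere (0 : EuclideanSpace ℝ (Fin D)) 1 | N ↑v ≤ ε})
      ⊆ {x : EuclideanSpace ℝ (Fin D) |
          SensTF.enorm (fun a => x (ι a) - (∑ b, x (ι b)) / ((m+1 : ℕ) : ℝ)) ≤ ε ∧ ‖x‖ ≤ 1} := by
    intro x hx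
    rw [Set.mem_smul] at hx
    obtain ⟨r, hr, y, hy, rfl⟩ := hx
    obtain ⟨v, hv, rfl⟩ := hy
    have hvnorm : ‖(v : EuclideanSpace ℝ (Fin D))‖ = 1 := mem_sphere_zero_iff_norm.1 v.2
    constructor
    · show SensTF.enorm _ ≤ ε
      calc SensTF.enorm (fun a => (r • (v:EuclideanSpace ℝ (Fin D))) (ι a)
              - (∑ b, (r • (v:EuclideanSpace ℝ (Fin D))) (ι b)) / ((m+1 : ℕ) : ℝ))
          = r * N ↑v := hscale r hr.1.le ↑v
      _ ≤ 1 * ε := mul_le_mul hr.2.le hv (hN0 _) one_pos.le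
      _ = ε := one_mul ε
    · show ‖r • (v : EuclideanSpace ℝ (Fin D))‖ ≤ 1
      rw [norm_smul, hvnorm, mul_one, Real.norm_eq_abs, abs_of_nonneg hr.1.le]
      exact hr.2.le

  -- ball volume
  have hball : volume (Metric.ball (0 : EuclideanSpace ℝ (Fin D)) 1)
      = ENNReal.ofReal (Real.sqrt Real.pi ^ D / Real.Gamma ((D:ℝ)/2+1)) := by
    rw [EuclideanSpace.volume_ball, Fintype.card_fin, ENNReal.ofReal_one, one_pow, one_mul]
  -- positivity facts for Gammas
  have hGm : 0 < Real.Gamma ((m:ℝ)/2+1) := Real.Gamma_pos_of_pos (by positivity)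
  have hGD : 0 < Real.Gamma ((D:ℝ)/2+1) := Real.Gamma_pos_of_pos (by positivity)
  have hGDm : 0 < Real.Gamma (((D-m : ℕ):ℝ)/2+1) := Real.Gamma_pos_of_pos (by positivity)
  have hcast : ((D-m:ℕ):ℝ) = (D:ℝ) - m := by
    rw [Nat.cast_sub (by omega)]
  have hsπ : (0:ℝ) < Real.sqrt Real.pi := Real.sqrt_pos.2 Real.pi_pos
  -- ε^m as rpow
  have hepsm : ε^m = (((m:ℝ)+1)/(4*(D:ℝ))) ^ ((m:ℝ)/2) := by
    have he2 : ε^2 = ((m:ℝ)+1)/(4*(D:ℝ)) := by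
      rw [hε, mul_pow, Real.sq_sqrt (by positivity)]
      push_cast; ring
    have hD0 : (0:ℝ) < (D:ℝ) := by exact_mod_cast hDpos
    calc ε^m = ε ^ ((m:ℕ):ℝ) := (Real.rpow_natCast ε m).symm
    _ = ε ^ ((2:ℝ) * ((m:ℝ)/2)) := by rw [show (2:ℝ)*((m:ℝ)/2) = ((m:ℕ):ℝ) by push_cast; ring]
    _ = (ε ^ (2:ℝ)) ^ ((m:ℝ)/2) := Real.rpow_mul hε0 _ _
    _ = (ε^2) ^ ((m:ℝ)/2) := by rw [Real.rpow_two]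
    _ = _ := by rw [he2]
  have hpowπ : Real.sqrt Real.pi ^ m * Real.sqrt Real.pi ^ (D-m) = Real.sqrt Real.pi ^ D := by
    rw [← pow_add]; congr 1; omega
  -- the numeric inequality
  have hnum : (ENNReal.ofReal ε)^m * ENNReal.ofReal (Real.sqrt Real.pi ^ m / Real.Gamma ((m:ℝ)/2+1))
        * ENNReal.ofReal (Real.sqrt Real.pi ^ (D - m) / Real.Gamma (((D-m : ℕ):ℝ)/2+1))
      ≤ ENNReal.ofReal (Real.exp (-(1/50 * ((m+1:ℕ):ℝ))))
        * volume (Metric.ball (0 : EuclideanSpace ℝ (Fin D)) 1) := by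
    rw [hball, ← ENNReal.ofReal_pow hε0, ← ENNReal.ofReal_mul (by positivity),
      ← ENNReal.ofReal_mul (by positivity), ← ENNReal.ofReal_mul (Real.exp_nonneg _)]
    apply ENNReal.ofReal_le_ofReal
    have hakey := S19.analytic_key m D hm hdD
    rw [← hcast] at hakey
    rw [← hepsm] at hakey
    have e1 : ε^m * (Real.sqrt Real.pi ^ m / Real.Gamma ((m:ℝ)/2+1))
          * (Real.sqrt Real.pi ^ (D-m) / Real.Gamma (((D-m : ℕ):ℝ)/2+1))
        = (ε^m * (Real.Gamma ((D:ℝ)/2+1) / (Real.Gamma ((m:ℝ)/2+1) * Real.Gamma (((D-m:ℕ):ℝ)/2+1))))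
          * (Real.sqrt Real.pi ^ D / Real.Gamma ((D:ℝ)/2+1)) := by
      rw [← hpowπ]
      field_simp
    rw [e1]
    have e2 : -(1/50 * ((m+1:ℕ):ℝ)) = -(1/50)*((m:ℝ)+1) := by push_cast; ring
    rw [e2]
    exact mul_le_mul_of_nonneg_right hakey (by positivity)
  -- assemble
  have hTuniv : (volume : Measure (EuclideanSpace ℝ (Fin D))).toSphere Set.univ
      = (D:ENNReal) * volume (Metric.ball (0 : EuclideanSpace ℝ (Fin D)) 1) := by
    rw [Measure.toSphere_apply_univ, hdim]
  have hT0 : (volume : Measure (EuclideanSpace ℝ (Fin D))).toSphere Set.univ ≠ 0 := by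
    rw [hTuniv]
    exact mul_ne_zero (by exact_mod_cast hDpos.ne') (Metric.measure_ball_pos volume _ one_pos).ne'
  have hTtop : (volume : Measure (EuclideanSpace ℝ (Fin D))).toSphere Set.univ ≠ ⊤ := by
    rw [hTuniv]
    exact ENNReal.mul_ne_top (ENNReal.natCast_ne_top D) measure_ball_lt_top.ne
  have hTS : (volume : Measure (EuclideanSpace ℝ (Fin D))).toSphere
        {v : Metric.sphere (0 : EuclideanSpace ℝ (Fin D)) 1 | N ↑v ≤ ε}
      ≤ ENNReal.ofReal (Real.exp (-(1/50 * ((m+1:ℕ):ℝ))))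
        * ((volume : Measure (EuclideanSpace ℝ (Fin D))).toSphere Set.univ) := by
    calc (volume : Measure (EuclideanSpace ℝ (Fin D))).toSphere
          {v : Metric.sphere (0 : EuclideanSpace ℝ (Fin D)) 1 | N ↑v ≤ ε}
        = Module.finrank ℝ (EuclideanSpace ℝ (Fin D))
          * volume (Set.Ioo (0:ℝ) 1 • (Subtype.val ''
            {v : Metric.sphere (0 : EuclideanSpace ℝ (Fin D)) 1 | N ↑v ≤ ε})) :=
          Measure.toSphere_apply' _ hSmeas
    _ = (D:ENNReal) * volume (Set.Ioo (0:ℝ) 1 • (Subtype.val ''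
            {v : Metric.sphere (0 : EuclideanSpace ℝ (Fin D)) 1 | N ↑v ≤ ε})) := by rw [hdim]
    _ ≤ (D:ENNReal) * volume {x : EuclideanSpace ℝ (Fin D) |
          SensTF.enorm (fun a => x (ι a) - (∑ b, x (ι b)) / ((m+1 : ℕ) : ℝ)) ≤ ε ∧ ‖x‖ ≤ 1} :=
        mul_le_mul_right (measure_mono hcone) _
    _ ≤ (D:ENNReal) * (ENNReal.ofReal (Real.exp (-(1/50 * ((m+1:ℕ):ℝ))))
          * volume (Metric.ball (0 : EuclideanSpace ℝ (Fin D)) 1)) :=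
        mul_le_mul_right ((S19.cylinder_bound D m hm hdD ι hι ε hε0).trans hnum) _
    _ = ENNReal.ofReal (Real.exp (-(1/50 * ((m+1:ℕ):ℝ))))
          * ((D:ENNReal) * volume (Metric.ball (0 : EuclideanSpace ℝ (Fin D)) 1)) := by ring
    _ = _ := by rw [hTuniv]
  show (((volume : Measure (EuclideanSpace ℝ (Fin D))).toSphere Set.univ)⁻¹
      • (volume : Measure (EuclideanSpace ℝ (Fin D))).toSphere)
      {v : Metric.sphere (0 : EuclideanSpace ℝ (Fin D)) 1 | N ↑v ≤ ε} ≤ _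
  rw [Measure.smul_apply, smul_eq_mul]
  calc ((volume : Measure (EuclideanSpace ℝ (Fin D))).toSphere Set.univ)⁻¹
        * (volume : Measure (EuclideanSpace ℝ (Fin D))).toSphere
          {v : Metric.sphere (0 : EuclideanSpace ℝ (Fin D)) 1 | N ↑v ≤ ε}
      ≤ ((volume : Measure (EuclideanSpace ℝ (Fin D))).toSphere Set.univ)⁻¹
        * (ENNReal.ofReal (Real.exp (-(1/50 * ((m+1:ℕ):ℝ))))
          * ((volume : Measure (EuclideanSpace ℝ (Fin D))).toSphere Set.univ)) :=
      mul_le_mul_right hTS _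
  _ = ENNReal.ofReal (Real.exp (-(1/50 * ((m+1:ℕ):ℝ))))
        * (((volume : Measure (EuclideanSpace ℝ (Fin D))).toSphere Set.univ)⁻¹
          * ((volume : Measure (EuclideanSpace ℝ (Fin D))).toSphere Set.univ)) := by ring
  _ = ENNReal.ofReal (Real.exp (-(1/50 * ((m+1:ℕ):ℝ)))) := by
      rw [ENNReal.inv_mul_cancel hT0 hTtop, mul_one]

end
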